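/- There exists, on any vector space V of signature (p,q) with p,q ≥ 2, a covariant derivative algebraic curvature tensor ∇R whose Szabó operator satisfies S(x)² = 0 for every x ∈ V, yet S does not vanish identically. -/

import Mathlib

section Aux

variable {V : Type*} [AddCommGroup V] [Module ℝ V]

/-- product of five linear functionals as a 5-linear map -/
noncomputable def P5 (g1 g2 g3 g4 g5 : V →ₗ[ℝ] ℝ) :
    V →ₗ[ℝ] V →ₗ[ℝ] V →ₗ[ℝ] V →ₗ[ℝ] V →ₗ[ℝ] ℝ :=
  g1.smulRight (g2.smulRight (g3.smulRight (g4.smulRight g5)))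

@[simp] lemma P5_apply (g1 g2 g3 g4 g5 : V →ₗ[ℝ] ℝ) (a b c d f : V) :
    P5 g1 g2 g3 g4 g5 a b c d f = g1 a * (g2 b * (g3 c * (g4 d * g5 f))) := by
  simp [P5, LinearMap.smulRight_apply, smul_eq_mul]

noncomputable def T5 (g h : V →ₗ[ℝ] ℝ) : V →ₗ[ℝ] V →ₗ[ℝ] V →ₗ[ℝ] V →ₗ[ℝ] V →ₗ[ℝ] ℝ :=
  P5 h g g h g + P5 (-g) h g h g + P5 g h h g g + P5 (-h) g h g g

noncomputable def nR5 (f₁ f₂ : V →ₗ[ℝ] ℝ) :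
    V →ₗ[ℝ] V →ₗ[ℝ] V →ₗ[ℝ] V →ₗ[ℝ] V →ₗ[ℝ] ℝ :=
  T5 f₁ f₁ + T5 f₁ f₂ + T5 f₂ f₁ + T5 f₂ f₂

lemma nR5_apply (f₁ f₂ : V →ₗ[ℝ] ℝ) (a b c d f : V) :
    nR5 f₁ f₂ a b c d f =
      (f₁ f * f₁ b * f₁ c * (f₁ a * f₁ d) - f₁ f * f₁ a * f₁ c * (f₁ b * f₁ d)
        + f₁ f * f₁ a * f₁ d * (f₁ b * f₁ c) - f₁ f * f₁ b * f₁ d * (f₁ a * f₁ c))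
      + (f₁ f * f₁ b * f₁ c * (f₂ a * f₂ d) - f₁ f * f₁ a * f₁ c * (f₂ b * f₂ d)
        + f₁ f * f₁ a * f₁ d * (f₂ b * f₂ c) - f₁ f * f₁ b * f₁ d * (f₂ a * f₂ c))
      + (f₂ f * f₂ b * f₂ c * (f₁ a * f₁ d) - f₂ f * f₂ a * f₂ c * (f₁ b * f₁ d)
        + f₂ f * f₂ a * f₂ d * (f₁ b * f₁ c) - f₂ f * f₂ b * f₂ d * (f₁ a * f₁ c))
      + (f₂ f * f₂ b * f₂ c * (f₂ a * f₂ d) - f₂ f * f₂ a * f₂ c * (f₂ b * f₂ d)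
        + f₂ f * f₂ a * f₂ d * (f₂ b * f₂ c) - f₂ f * f₂ b * f₂ d * (f₂ a * f₂ c)) := by
  simp only [nR5, T5, LinearMap.add_apply, LinearMap.neg_apply, P5_apply]
  ring

/-- the Szabó operator of `nR5`. -/
noncomputable def S5 (f₁ f₂ : V →ₗ[ℝ] ℝ) (v₁ v₂ : V) (x : V) : Module.End ℝ V :=
  (((f₁ x ^ 3 + f₂ x ^ 3 + (f₁ x ^ 2 + f₂ x ^ 2) * f₁ x
        - f₁ x * f₁ x ^ 2 - f₁ x ^ 2 * f₁ x) • f₁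
      + (-(f₁ x * f₂ x ^ 2) - f₁ x ^ 2 * f₂ x) • f₂).smulRight v₁)
  + (((-(f₂ x * f₁ x ^ 2) - f₂ x ^ 2 * f₁ x) • f₁
      + (f₁ x ^ 3 + f₂ x ^ 3 + (f₁ x ^ 2 + f₂ x ^ 2) * f₂ x
        - f₂ x * f₂ x ^ 2 - f₂ x ^ 2 * f₂ x) • f₂).smulRight v₂)

lemma S5_apply (f₁ f₂ : V →ₗ[ℝ] ℝ) (v₁ v₂ : V) (x y : V) :
    S5 f₁ f₂ v₁ v₂ x y =
      ((f₁ x ^ 3 + f₂ x ^ 3 + (f₁ x ^ 2 + f₂ x ^ 2) * f₁ x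
          - f₁ x * f₁ x ^ 2 - f₁ x ^ 2 * f₁ x) * f₁ y
        + (-(f₁ x * f₂ x ^ 2) - f₁ x ^ 2 * f₂ x) * f₂ y) • v₁
      + ((-(f₂ x * f₁ x ^ 2) - f₂ x ^ 2 * f₁ x) * f₁ y
        + (f₁ x ^ 3 + f₂ x ^ 3 + (f₁ x ^ 2 + f₂ x ^ 2) * f₂ x
          - f₂ x * f₂ x ^ 2 - f₂ x ^ 2 * f₂ x) * f₂ y) • v₂ := by
  simp [S5, LinearMap.add_apply, LinearMap.smul_apply, LinearMap.smulRight_apply,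
    smul_eq_mul, Module.End]

lemma main_aux (B : LinearMap.BilinForm ℝ V) (f₁ f₂ : V →ₗ[ℝ] ℝ) (v₁ v₂ : V)
    (h1 : B v₁ = f₁) (h2 : B v₂ = f₂)
    (hv11 : f₁ v₁ = 0) (hv12 : f₁ v₂ = 0) (hv21 : f₂ v₁ = 0) (hv22 : f₂ v₂ = 0)
    (x₀ y₀ : V) (hx1 : f₁ x₀ = 1) (hx2 : f₂ x₀ = 0) (hy1 : f₁ y₀ = 0) (hy2 : f₂ y₀ = 1)
    (g : V →ₗ[ℝ] ℝ) (hg1 : g v₁ = 0) (hg2 : g v₂ = 1) :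
    (∀ a b c d f, nR5 f₁ f₂ a b c d f = - nR5 f₁ f₂ b a c d f) ∧
    (∀ a b c d f, nR5 f₁ f₂ a b c d f = nR5 f₁ f₂ c d a b f) ∧
    (∀ a b c d f, nR5 f₁ f₂ a b c d f + nR5 f₁ f₂ a c d b f + nR5 f₁ f₂ a d b c f = 0) ∧
    (∀ a b c d f, nR5 f₁ f₂ a b c d f + nR5 f₁ f₂ a b d f c + nR5 f₁ f₂ a b f c d = 0) ∧
    (∀ x y w, B (S5 f₁ f₂ v₁ v₂ x y) w = nR5 f₁ f₂ y x x w x) ∧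
    (∀ x : V, (S5 f₁ f₂ v₁ v₂ x) ^ 2 = 0) ∧
    (∃ x : V, S5 f₁ f₂ v₁ v₂ x ≠ 0) := by
  have hSv : ∀ x : V, S5 f₁ f₂ v₁ v₂ x v₁ = 0 ∧ S5 f₁ f₂ v₁ v₂ x v₂ = 0 := by
    intro x
    constructor <;> simp [S5_apply, hv11, hv12, hv21, hv22]
  refine ⟨fun a b c d f => ?_, fun a b c d f => ?_, fun a b c d f => ?_,
    fun a b c d f => ?_, fun x y w => ?_, fun x => ?_, ⟨x₀, ?_⟩⟩
  · simp only [nR5_apply]; ring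
  · simp only [nR5_apply]; ring
  · simp only [nR5_apply]; ring
  · simp only [nR5_apply]; ring
  · simp only [S5_apply, map_add, map_smul, LinearMap.add_apply, LinearMap.smul_apply,
      smul_eq_mul, h1, h2, nR5_apply]
    ring
  · apply LinearMap.ext
    intro y
    have hz : (S5 f₁ f₂ v₁ v₂ x) ((S5 f₁ f₂ v₁ v₂ x) y) = 0 := by
      rw [show (S5 f₁ f₂ v₁ v₂ x) y = _ from S5_apply f₁ f₂ v₁ v₂ x y]
      rw [map_add, map_smul, map_smul, (hSv x).1, (hSv x).2]
      simp
    calc ((S5 f₁ f₂ v₁ v₂ x) ^ 2) y = (S5 f₁ f₂ v₁ v₂ x) ((S5 f₁ f₂ v₁ v₂ x) y) := by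
          rw [pow_two]; rfl
      _ = 0 := hz
  · intro h
    have h0 : S5 f₁ f₂ v₁ v₂ x₀ y₀ = 0 := by rw [h]; rfl
    have h1' : g (S5 f₁ f₂ v₁ v₂ x₀ y₀) = 1 := by
      rw [show S5 f₁ f₂ v₁ v₂ x₀ y₀ = _ from S5_apply f₁ f₂ v₁ v₂ x₀ y₀]
      simp [hx1, hx2, hy1, hy2, hg1, hg2]
    rw [h0] at h1'
    simp at h1'

end Aux

/-- On any vector space of signature `(p,q)` with `p,q ≥ 2` there exists a covariant
derivative algebraic curvature tensor whose Szabó operator `S` satisfies `S(x)² = 0`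
for every `x`, yet `S` does not vanish identically. -/
theorem exists_szabo_square_zero_nonzero
    (V : Type*) [AddCommGroup V] [Module ℝ V] [FiniteDimensional ℝ V]
    (p q : ℕ) (hp : 2 ≤ p) (hq : 2 ≤ q)
    (B : LinearMap.BilinForm ℝ V) (hBsymm : ∀ x y, B x y = B y x)
    (e : Module.Basis (Fin (p + q)) ℝ V)
    (hBe : ∀ i j, B (e i) (e j) =
      if i = j then (if (i : ℕ) < p then (-1 : ℝ) else 1) else 0) :
    ∃ (nR : V →ₗ[ℝ] V →ₗ[ℝ] V →ₗ[ℝ] V →ₗ[ℝ] V →ₗ[ℝ] ℝ)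
      (S : V → Module.End ℝ V),
      (∀ a b c d f, nR a b c d f = - nR b a c d f) ∧
      (∀ a b c d f, nR a b c d f = nR c d a b f) ∧
      (∀ a b c d f, nR a b c d f + nR a c d b f + nR a d b c f = 0) ∧
      (∀ a b c d f, nR a b c d f + nR a b d f c + nR a b f c d = 0) ∧
      (∀ x y w, B (S x y) w = nR y x x w x) ∧
      (∀ x : V, (S x) ^ 2 = 0) ∧
      (∃ x : V, S x ≠ 0) := by
  obtain ⟨i0, hi0⟩ : ∃ i : Fin (p+q), (i:ℕ) = 0 := ⟨⟨0, by omega⟩, rfl⟩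
  obtain ⟨i1, hi1⟩ : ∃ i : Fin (p+q), (i:ℕ) = 1 := ⟨⟨1, by omega⟩, rfl⟩
  obtain ⟨j0, hj0⟩ : ∃ i : Fin (p+q), (i:ℕ) = p := ⟨⟨p, by omega⟩, rfl⟩
  obtain ⟨j1, hj1⟩ : ∃ i : Fin (p+q), (i:ℕ) = p+1 := ⟨⟨p+1, by omega⟩, rfl⟩
  have hne : ∀ (a b : Fin (p+q)), (a:ℕ) ≠ (b:ℕ) → a ≠ b :=
    fun a b h hab => h (by rw [hab])
  have d1 : i0 ≠ i1 := hne _ _ (by omega)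
  have d2 : i0 ≠ j0 := hne _ _ (by omega)
  have d3 : i0 ≠ j1 := hne _ _ (by omega)
  have d4 : i1 ≠ j0 := hne _ _ (by omega)
  have d5 : i1 ≠ j1 := hne _ _ (by omega)
  have d6 : j0 ≠ j1 := hne _ _ (by omega)
  set f₁ : V →ₗ[ℝ] ℝ := e.coord i0 + e.coord j0 with hf₁
  set f₂ : V →ₗ[ℝ] ℝ := e.coord i1 + e.coord j1 with hf₂
  set v₁ : V := - e i0 + e j0 with hv₁
  set v₂ : V := - e i1 + e j1 with hv₂
  have hc : ∀ i k : Fin (p+q), e.coord i (e k) = if i = k then 1 else 0 := by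
    intro i k
    rw [Module.Basis.coord_apply, Module.Basis.repr_self, Finsupp.single_apply]
    rcases eq_or_ne i k with h | h
    · simp [h]
    · simp [h, Ne.symm h]
  have hf₁e : ∀ k, f₁ (e k) = (if i0 = k then 1 else 0) + (if j0 = k then 1 else 0) := by
    intro k; simp [hf₁, hc]
  have hf₂e : ∀ k, f₂ (e k) = (if i1 = k then 1 else 0) + (if j1 = k then 1 else 0) := by
    intro k; simp [hf₂, hc]
  have hlt0 : (i0:ℕ) < p := by omega
  have hlt1 : ¬ ((j0:ℕ) < p) := by omega
  have hlt2 : (i1:ℕ) < p := by omega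
  have hlt3 : ¬ ((j1:ℕ) < p) := by omega
  have hB1 : B v₁ = f₁ := by
    apply e.ext
    intro k
    rw [hv₁]
    simp only [map_add, map_neg, LinearMap.add_apply, LinearMap.neg_apply, hBe, hf₁e,
      hlt0, hlt1, hlt2, hlt3, if_true, if_false]
    split_ifs <;> norm_num
  have hB2 : B v₂ = f₂ := by
    apply e.ext
    intro k
    rw [hv₂]
    simp only [map_add, map_neg, LinearMap.add_apply, LinearMap.neg_apply, hBe, hf₂e,
      hlt0, hlt1, hlt2, hlt3, if_true, if_false]
    split_ifs <;> norm_num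
  have hv11 : f₁ v₁ = 0 := by
    rw [hv₁]
    simp [map_add, map_neg, hf₁e, d1, d2, d3, d4, d5, d6,
      d1.symm, d2.symm, d3.symm, d4.symm, d5.symm, d6.symm]
  have hv12 : f₁ v₂ = 0 := by
    rw [hv₂]
    simp [map_add, map_neg, hf₁e, d1, d2, d3, d4, d5, d6,
      d1.symm, d2.symm, d3.symm, d4.symm, d5.symm, d6.symm]
  have hv21 : f₂ v₁ = 0 := by
    rw [hv₁]
    simp [map_add, map_neg, hf₂e, d1, d2, d3, d4, d5, d6,
      d1.symm, d2.symm, d3.symm, d4.symm, d5.symm, d6.symm]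
  have hv22 : f₂ v₂ = 0 := by
    rw [hv₂]
    simp [map_add, map_neg, hf₂e, d1, d2, d3, d4, d5, d6,
      d1.symm, d2.symm, d3.symm, d4.symm, d5.symm, d6.symm]
  have hx1 : f₁ (e j0) = 1 := by simp [hf₁e, d2]
  have hx2 : f₂ (e j0) = 0 := by simp [hf₂e, d4, d6.symm]
  have hy1 : f₁ (e j1) = 0 := by simp [hf₁e, d3, d6]
  have hy2 : f₂ (e j1) = 1 := by simp [hf₂e, d5]
  have hg1 : e.coord j1 v₁ = 0 := by
    rw [hv₁]; simp [map_add, map_neg, hc, d3.symm, d6.symm]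
  have hg2 : e.coord j1 v₂ = 1 := by
    rw [hv₂]; simp [map_add, map_neg, hc, d5.symm]
  exact ⟨nR5 f₁ f₂, S5 f₁ f₂ v₁ v₂,
    main_aux B f₁ f₂ v₁ v₂ hB1 hB2 hv11 hv12 hv21 hv22 (e j0) (e j1)
      hx1 hx2 hy1 hy2 (e.coord j1) hg1 hg2⟩
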